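/- Let p be an odd prime such that the multiplicative order g of 2 in (ℤ/pℤ)^* is even. Let n = 2^c + 2^b + 2^a where c > b > a ≥ 0 and n ≥ 11, and suppose that the residues of a, b, c modulo g form the multiset {1, g/2, g/2} (i.e. one of them is congruent to 1 and the other two to g/2 modulo g). Then the cyclotomic polynomial Φ_{2p}(t) divides the descent set polynomial Q_n(t). -/

import Mathlib

open Finset Polynomial

/-- The descent set of a permutation of `Fin n`, as a subset of `[n-1] = {1,…,n-1}`
(1-based positions): `i` is a descent if `π(i) > π(i+1)`. -/
def descentSet (n : ℕ) (π : Equiv.Perm (Fin n)) : Finset ℕ :=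
  (Finset.Ico 1 n).filter fun i => ∀ h : i < n, π ⟨i, h⟩ < π ⟨i - 1, by omega⟩

/-- The descent set statistic `β_n(S)`: the number of permutations of `{1,…,n}`
with descent set `S`. -/
def beta (n : ℕ) (S : Finset ℕ) : ℕ :=
  (Finset.univ.filter fun π : Equiv.Perm (Fin n) => descentSet n π = S).card

/-- The descent set polynomial `Q_n(t) = ∑_{S ⊆ [n-1]} t^{β_n(S)}`. -/
noncomputable def Q (n : ℕ) : Polynomial ℤ :=
  ∑ S ∈ (Finset.Ico 1 n).powerset, Polynomial.X ^ beta n S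

section Basic

lemma descentSet_subset_Ico (n : ℕ) (π : Equiv.Perm (Fin n)) :
    descentSet n π ⊆ Finset.Ico 1 n := Finset.filter_subset _ _

lemma mem_descentSet_iff {n j : ℕ} (π : Equiv.Perm (Fin n)) (h1 : 1 ≤ j) (h2 : j < n) :
    j ∈ descentSet n π ↔ π ⟨j, h2⟩ < π ⟨j - 1, by omega⟩ := by
  constructor
  · intro h
    exact (Finset.mem_filter.mp h).2 h2
  · intro h
    exact Finset.mem_filter.mpr ⟨Finset.mem_Ico.mpr ⟨h1, h2⟩, fun _ => h⟩

lemma beta_empty (n : ℕ) : beta n ∅ = 1 := by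
  unfold beta
  rw [Finset.card_eq_one]
  refine ⟨1, ?_⟩
  ext π
  simp only [Finset.mem_filter, Finset.mem_univ, true_and, Finset.mem_singleton]
  constructor
  · intro hdes
    have key : ∀ j : ℕ, ∀ hj : j + 1 < n, π ⟨j, by omega⟩ < π ⟨j + 1, hj⟩ := by
      intro j hj
      by_contra hle
      push_neg at hle
      have hne : π ⟨j + 1, hj⟩ ≠ π ⟨j, by omega⟩ := by
        intro he
        have := π.injective he
        simp [Fin.ext_iff] at this
      have hlt : π ⟨j + 1, hj⟩ < π ⟨j, by omega⟩ := lt_of_le_of_ne hle hne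
      have hmem : (j + 1) ∈ descentSet n π := by
        rw [mem_descentSet_iff π (by omega) hj]
        simpa using hlt
      rw [hdes] at hmem
      exact absurd hmem (Finset.notMem_empty _)
    have step : ∀ d : ℕ, ∀ x' y' : ℕ, ∀ hx' : x' < n, ∀ hy' : y' < n,
        y' = x' + d + 1 → π ⟨x', hx'⟩ < π ⟨y', hy'⟩ := by
      intro d
      induction d with
      | zero =>
          intro x' y' hx' hy' he
          subst he
          exact key x' hy'
      | succ d ih =>
          intro x' y' hx' hy' he
          have h1 : π ⟨x', hx'⟩ < π ⟨x' + d + 1, by omega⟩ := ih x' (x' + d + 1) hx' (by omega) rfl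
          have h2 : π ⟨x' + d + 1, by omega⟩ < π ⟨x' + d + 1 + 1, by omega⟩ := key (x' + d + 1) (by omega)
          have hy : (⟨x' + d + 1 + 1, by omega⟩ : Fin n) = ⟨y', hy'⟩ := by ext; simp; omega
          rw [hy] at h2
          exact h1.trans h2
    have hmono : StrictMono π := by
      intro x y hxy
      have := step ((y : ℕ) - (x : ℕ) - 1) x y x.isLt y.isLt (by omega)
      have hx : (⟨(x : ℕ), x.isLt⟩ : Fin n) = x := by ext; rfl
      have hy : (⟨(y : ℕ), y.isLt⟩ : Fin n) = y := by ext; rfl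
      rwa [hx, hy] at this
    have hrange : Set.range π = Set.range (id : Fin n → Fin n) := by
      rw [π.surjective.range_eq, Set.range_id]
    have := (StrictMono.range_inj hmono strictMono_id).mp hrange
    ext x : 1
    · exact congrFun this x
  · rintro rfl
    ext j
    simp only [descentSet, Finset.mem_filter, Finset.mem_Ico, Finset.notMem_empty, iff_false]
    rintro ⟨⟨hj1, hj2⟩, h⟩
    have := h hj2
    simp only [Equiv.Perm.one_apply, Fin.mk_lt_mk] at this
    omega

end Basic

section Split

variable {n i : ℕ}

def lowMap (hii : i ≤ n) (π : Equiv.Perm (Fin n)) : Fin i → Fin n :=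
  fun j => π (Fin.castLE hii j)

def highMap (i : ℕ) (π : Equiv.Perm (Fin n)) : Fin (n - i) → Fin n :=
  fun j => π ⟨i + j.1, by have := j.2; omega⟩

lemma lowMap_injective (hii : i ≤ n) (π : Equiv.Perm (Fin n)) :
    Function.Injective (lowMap hii π) :=
  fun _ _ h => Fin.castLE_injective hii (π.injective h)

lemma highMap_injective (i : ℕ) (π : Equiv.Perm (Fin n)) :
    Function.Injective (highMap i π) := by
  intro j1 j2 h
  have := π.injective h
  simp only [Fin.mk.injEq] at this
  exact Fin.ext (by omega)

def lowSet (hii : i ≤ n) (π : Equiv.Perm (Fin n)) : Finset (Fin n) :=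
  Finset.image (lowMap hii π) Finset.univ

def highSet (i : ℕ) (π : Equiv.Perm (Fin n)) : Finset (Fin n) :=
  Finset.image (highMap i π) Finset.univ

lemma card_lowSet (hii : i ≤ n) (π : Equiv.Perm (Fin n)) : (lowSet hii π).card = i := by
  rw [lowSet, Finset.card_image_of_injective _ (lowMap_injective hii π), Finset.card_univ,
    Fintype.card_fin]

lemma card_highSet (i : ℕ) (π : Equiv.Perm (Fin n)) : (highSet i π).card = n - i := by
  rw [highSet, Finset.card_image_of_injective _ (highMap_injective i π), Finset.card_univ,
    Fintype.card_fin]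

lemma highSet_eq_compl (hii : i ≤ n) (π : Equiv.Perm (Fin n)) :
    highSet i π = (lowSet hii π)ᶜ := by
  apply Finset.eq_of_subset_of_card_le
  · intro x hx
    rw [Finset.mem_compl]
    intro hx'
    rw [highSet, Finset.mem_image] at hx
    rw [lowSet, Finset.mem_image] at hx'
    obtain ⟨j1, -, hj1⟩ := hx
    obtain ⟨j2, -, hj2⟩ := hx'
    have : π ⟨i + j1.1, by have := j1.2; omega⟩ = π (Fin.castLE hii j2) := by
      rw [← hj2] at hj1; exact hj1
    have := π.injective this
    have hv : i + j1.1 = (j2 : ℕ) := by simpa [Fin.ext_iff] using this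
    have := j2.2
    omega
  · rw [Finset.card_compl, card_highSet, card_lowSet, Fintype.card_fin]

noncomputable def stdLow (hii : i ≤ n) (π : Equiv.Perm (Fin n)) : Equiv.Perm (Fin i) :=
  (Equiv.ofBijective
      (fun j => (⟨lowMap hii π j, Finset.mem_image_of_mem _ (Finset.mem_univ j)⟩ :
        {x // x ∈ lowSet hii π}))
      (by
        rw [Fintype.bijective_iff_injective_and_card]
        constructor
        · intro j1 j2 h
          exact lowMap_injective hii π (Subtype.ext_iff.mp h)
        · rw [Fintype.card_coe, card_lowSet, Fintype.card_fin])).trans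
    ((lowSet hii π).orderIsoOfFin (card_lowSet hii π)).symm.toEquiv

noncomputable def stdHigh (i : ℕ) (π : Equiv.Perm (Fin n)) : Equiv.Perm (Fin (n - i)) :=
  (Equiv.ofBijective
      (fun j => (⟨highMap i π j, Finset.mem_image_of_mem _ (Finset.mem_univ j)⟩ :
        {x // x ∈ highSet i π}))
      (by
        rw [Fintype.bijective_iff_injective_and_card]
        constructor
        · intro j1 j2 h
          exact highMap_injective i π (Subtype.ext_iff.mp h)
        · rw [Fintype.card_coe, card_highSet, Fintype.card_fin])).trans
    ((highSet i π).orderIsoOfFin (card_highSet i π)).symm.toEquiv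

lemma oT_stdLow (hii : i ≤ n) (π : Equiv.Perm (Fin n)) (j : Fin i) :
    (((lowSet hii π).orderIsoOfFin (card_lowSet hii π)) (stdLow hii π j) : Fin n)
      = lowMap hii π j := by
  simp [stdLow]

lemma oT_stdHigh (i : ℕ) (π : Equiv.Perm (Fin n)) (j : Fin (n - i)) :
    (((highSet i π).orderIsoOfFin (card_highSet i π)) (stdHigh i π j) : Fin n)
      = highMap i π j := by
  simp [stdHigh]

lemma stdLow_lt_iff (hii : i ≤ n) (π : Equiv.Perm (Fin n)) (j1 j2 : Fin i) :
    stdLow hii π j1 < stdLow hii π j2 ↔ lowMap hii π j1 < lowMap hii π j2 := by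
  rw [← ((lowSet hii π).orderIsoOfFin (card_lowSet hii π)).lt_iff_lt,
    ← Subtype.coe_lt_coe, oT_stdLow, oT_stdLow]

lemma stdHigh_lt_iff (i : ℕ) (π : Equiv.Perm (Fin n)) (j1 j2 : Fin (n - i)) :
    stdHigh i π j1 < stdHigh i π j2 ↔ highMap i π j1 < highMap i π j2 := by
  rw [← ((highSet i π).orderIsoOfFin (card_highSet i π)).lt_iff_lt,
    ← Subtype.coe_lt_coe, oT_stdHigh, oT_stdHigh]

lemma perm_unique_of_lt_iff {m : ℕ} {X : Type*} [LinearOrder X] {ρ ρ' : Equiv.Perm (Fin m)}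
    {v : Fin m → X} (h : ∀ j1 j2, ρ j1 < ρ j2 ↔ v j1 < v j2)
    (h' : ∀ j1 j2, ρ' j1 < ρ' j2 ↔ v j1 < v j2) : ρ = ρ' := by
  have hw : StrictMono (fun x => ρ' (ρ.symm x)) := by
    intro x y hxy
    have hx : ρ (ρ.symm x) < ρ (ρ.symm y) := by
      rwa [Equiv.apply_symm_apply, Equiv.apply_symm_apply]
    exact (h' _ _).mpr ((h _ _).mp hx)
  have hrange : Set.range (fun x => ρ' (ρ.symm x)) = Set.range (id : Fin m → Fin m) := by
    rw [Set.range_id]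
    exact (ρ'.surjective.comp ρ.symm.surjective).range_eq
  have hid := (StrictMono.range_inj hw strictMono_id).mp hrange
  apply Equiv.ext
  intro x
  have := congrFun hid (ρ x)
  simpa using this.symm

end Split

section Join

variable {n i : ℕ}

def joinFun (T T₂ : Finset (Fin n)) (hT : T.card = i) (hT₂ : T₂.card = n - i)
    (σ : Equiv.Perm (Fin i)) (τ : Equiv.Perm (Fin (n - i))) : Fin n → Fin n :=
  fun j => if h : (j : ℕ) < i then (T.orderIsoOfFin hT (σ ⟨j, h⟩) : Fin n)
    else (T₂.orderIsoOfFin hT₂ (τ ⟨(j : ℕ) - i, by have := j.2; omega⟩) : Fin n)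

lemma joinFun_bijective (T T₂ : Finset (Fin n)) (hT : T.card = i) (hT₂ : T₂.card = n - i)
    (hcompl : T₂ = Tᶜ) (σ : Equiv.Perm (Fin i)) (τ : Equiv.Perm (Fin (n - i))) :
    Function.Bijective (joinFun T T₂ hT hT₂ σ τ) := by
  subst hcompl
  rw [Fintype.bijective_iff_injective_and_card]
  refine ⟨?_, rfl⟩
  intro j1 j2 h
  unfold joinFun at h
  by_cases h1 : (j1 : ℕ) < i <;> by_cases h2 : (j2 : ℕ) < i
  · rw [dif_pos h1, dif_pos h2] at h
    have := σ.injective ((T.orderIsoOfFin hT).injective (Subtype.coe_injective h))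
    simp only [Fin.mk.injEq] at this
    exact Fin.ext this
  · rw [dif_pos h1, dif_neg h2] at h
    exfalso
    have hmem1 : ((T.orderIsoOfFin hT) (σ ⟨j1, h1⟩) : Fin n) ∈ T :=
      ((T.orderIsoOfFin hT) (σ ⟨j1, h1⟩)).2
    have hmem2 : ((Tᶜ.orderIsoOfFin hT₂) (τ ⟨(j2 : ℕ) - i, by have := j2.2; omega⟩) : Fin n) ∈ Tᶜ :=
      ((Tᶜ.orderIsoOfFin hT₂) _).2
    rw [Finset.mem_compl] at hmem2
    rw [h] at hmem1
    exact hmem2 hmem1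
  · rw [dif_neg h1, dif_pos h2] at h
    exfalso
    have hmem1 : ((Tᶜ.orderIsoOfFin hT₂) (τ ⟨(j1 : ℕ) - i, by have := j1.2; omega⟩) : Fin n) ∈ Tᶜ :=
      ((Tᶜ.orderIsoOfFin hT₂) _).2
    have hmem2 : ((T.orderIsoOfFin hT) (σ ⟨j2, h2⟩) : Fin n) ∈ T :=
      ((T.orderIsoOfFin hT) (σ ⟨j2, h2⟩)).2
    rw [Finset.mem_compl] at hmem1
    rw [h] at hmem1
    exact hmem1 hmem2
  · rw [dif_neg h1, dif_neg h2] at h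
    have := τ.injective ((Tᶜ.orderIsoOfFin hT₂).injective (Subtype.coe_injective h))
    simp only [Fin.mk.injEq] at this
    have hj1 := j1.2
    have hj2 := j2.2
    exact Fin.ext (by omega)

noncomputable def joinPerm (T T₂ : Finset (Fin n)) (hT : T.card = i) (hT₂ : T₂.card = n - i)
    (hcompl : T₂ = Tᶜ) (σ : Equiv.Perm (Fin i)) (τ : Equiv.Perm (Fin (n - i))) :
    Equiv.Perm (Fin n) :=
  Equiv.ofBijective _ (joinFun_bijective T T₂ hT hT₂ hcompl σ τ)

lemma joinPerm_apply_low {T T₂ : Finset (Fin n)} {hT : T.card = i} {hT₂ : T₂.card = n - i}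
    {hcompl : T₂ = Tᶜ} {σ : Equiv.Perm (Fin i)} {τ : Equiv.Perm (Fin (n - i))}
    (j : Fin n) (h : (j : ℕ) < i) :
    joinPerm T T₂ hT hT₂ hcompl σ τ j = (T.orderIsoOfFin hT (σ ⟨j, h⟩) : Fin n) := by
  simp only [joinPerm, Equiv.ofBijective_apply, joinFun, dif_pos h]

lemma joinPerm_apply_high {T T₂ : Finset (Fin n)} {hT : T.card = i} {hT₂ : T₂.card = n - i}
    {hcompl : T₂ = Tᶜ} {σ : Equiv.Perm (Fin i)} {τ : Equiv.Perm (Fin (n - i))}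
    (j : Fin n) (h : ¬ (j : ℕ) < i) :
    joinPerm T T₂ hT hT₂ hcompl σ τ j
      = (T₂.orderIsoOfFin hT₂ (τ ⟨(j : ℕ) - i, by have := j.2; omega⟩) : Fin n) := by
  simp only [joinPerm, Equiv.ofBijective_apply, joinFun, dif_neg h]

lemma lowMap_joinPerm {T T₂ : Finset (Fin n)} {hT : T.card = i} {hT₂ : T₂.card = n - i}
    {hcompl : T₂ = Tᶜ} {σ : Equiv.Perm (Fin i)} {τ : Equiv.Perm (Fin (n - i))}
    (hii : i ≤ n) (j : Fin i) :
    lowMap hii (joinPerm T T₂ hT hT₂ hcompl σ τ) j = (T.orderIsoOfFin hT (σ j) : Fin n) := by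
  rw [lowMap, joinPerm_apply_low _ (by simpa using j.2)]
  congr 1

lemma highMap_joinPerm {T T₂ : Finset (Fin n)} {hT : T.card = i} {hT₂ : T₂.card = n - i}
    {hcompl : T₂ = Tᶜ} {σ : Equiv.Perm (Fin i)} {τ : Equiv.Perm (Fin (n - i))}
    (j : Fin (n - i)) :
    highMap i (joinPerm T T₂ hT hT₂ hcompl σ τ) j = (T₂.orderIsoOfFin hT₂ (τ j) : Fin n) := by
  rw [highMap, joinPerm_apply_high _ (by simp)]
  congr 2
  ext
  simp

lemma lowSet_joinPerm {T T₂ : Finset (Fin n)} {hT : T.card = i} {hT₂ : T₂.card = n - i}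
    {hcompl : T₂ = Tᶜ} {σ : Equiv.Perm (Fin i)} {τ : Equiv.Perm (Fin (n - i))}
    (hii : i ≤ n) :
    lowSet hii (joinPerm T T₂ hT hT₂ hcompl σ τ) = T := by
  ext x
  rw [lowSet, Finset.mem_image]
  constructor
  · rintro ⟨j, -, rfl⟩
    rw [lowMap_joinPerm hii]
    exact ((T.orderIsoOfFin hT) (σ j)).2
  · intro hx
    refine ⟨σ.symm ((T.orderIsoOfFin hT).symm ⟨x, hx⟩), Finset.mem_univ _, ?_⟩
    rw [lowMap_joinPerm hii, Equiv.apply_symm_apply, OrderIso.apply_symm_apply]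

lemma stdLow_joinPerm {T T₂ : Finset (Fin n)} {hT : T.card = i} {hT₂ : T₂.card = n - i}
    {hcompl : T₂ = Tᶜ} {σ : Equiv.Perm (Fin i)} {τ : Equiv.Perm (Fin (n - i))}
    (hii : i ≤ n) :
    stdLow hii (joinPerm T T₂ hT hT₂ hcompl σ τ) = σ := by
  apply perm_unique_of_lt_iff (v := lowMap hii (joinPerm T T₂ hT hT₂ hcompl σ τ))
  · exact stdLow_lt_iff hii _
  · intro j1 j2
    rw [lowMap_joinPerm hii, lowMap_joinPerm hii, Subtype.coe_lt_coe, OrderIso.lt_iff_lt]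

lemma stdHigh_joinPerm {T T₂ : Finset (Fin n)} {hT : T.card = i} {hT₂ : T₂.card = n - i}
    {hcompl : T₂ = Tᶜ} {σ : Equiv.Perm (Fin i)} {τ : Equiv.Perm (Fin (n - i))} :
    stdHigh i (joinPerm T T₂ hT hT₂ hcompl σ τ) = τ := by
  apply perm_unique_of_lt_iff (v := highMap i (joinPerm T T₂ hT hT₂ hcompl σ τ))
  · exact stdHigh_lt_iff i _
  · intro j1 j2
    rw [highMap_joinPerm, highMap_joinPerm, Subtype.coe_lt_coe, OrderIso.lt_iff_lt]

lemma orderIsoOfFin_coe_congr {α : Type*} [LinearOrder α] {s t : Finset α} {k : ℕ}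
    (h : s = t) (hs : s.card = k) (x : Fin k) :
    ((s.orderIsoOfFin hs x : α)) = (t.orderIsoOfFin (h ▸ hs) x : α) := by
  subst h; rfl

lemma join_std (hii : i ≤ n) (π : Equiv.Perm (Fin n)) (T₂ : Finset (Fin n))
    (hT₂ : T₂.card = n - i) (hcompl : T₂ = (lowSet hii π)ᶜ) :
    joinPerm (lowSet hii π) T₂ (card_lowSet hii π) hT₂ hcompl (stdLow hii π) (stdHigh i π)
      = π := by
  apply Equiv.ext
  intro j
  by_cases h : (j : ℕ) < i
  · rw [joinPerm_apply_low j h, oT_stdLow]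
    rw [lowMap]
    congr 1
  · rw [joinPerm_apply_high j h]
    have he : T₂ = highSet i π := by rw [hcompl, ← highSet_eq_compl hii π]
    rw [orderIsoOfFin_coe_congr he, oT_stdHigh]
    rw [highMap]
    congr 1
    ext
    have := j.2
    simp
    omega

end Join

section Descents

variable {n i : ℕ}

lemma descentSet_joinPerm (h1 : 1 ≤ i) (h2 : i < n) (T T₂ : Finset (Fin n))
    (hT : T.card = i) (hT₂ : T₂.card = n - i) (hcompl : T₂ = Tᶜ)
    (σ : Equiv.Perm (Fin i)) (τ : Equiv.Perm (Fin (n - i))) :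
    descentSet n (joinPerm T T₂ hT hT₂ hcompl σ τ) \ {i}
      = descentSet i σ ∪ (descentSet (n - i) τ).image (· + i) := by
  set π := joinPerm T T₂ hT hT₂ hcompl σ τ with hπ
  ext j
  simp only [Finset.mem_sdiff, Finset.mem_singleton, Finset.mem_union, Finset.mem_image]
  by_cases hj : 1 ≤ j ∧ j < n
  · obtain ⟨hj1, hj2⟩ := hj
    rcases lt_trichotomy j i with hji | hji | hji
    · -- j < i
      have hmem : j ∈ descentSet n π ↔ j ∈ descentSet i σ := by
        rw [mem_descentSet_iff π hj1 hj2, mem_descentSet_iff σ hj1 hji]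
        rw [hπ, joinPerm_apply_low _ (by simpa using hji),
          joinPerm_apply_low (⟨j - 1, by omega⟩ : Fin n) (by simp; omega)]
        rw [Subtype.coe_lt_coe, OrderIso.lt_iff_lt]
      constructor
      · rintro ⟨hd, -⟩
        exact Or.inl (hmem.mp hd)
      · rintro (hd | ⟨d, hd, rfl⟩)
        · exact ⟨hmem.mpr hd, by omega⟩
        · have := (Finset.mem_Ico.mp (descentSet_subset_Ico _ τ hd)).1
          omega
    · -- j = i
      subst hji
      constructor
      · rintro ⟨-, h⟩
        exact absurd rfl h
      · rintro (hd | ⟨d, hd, hdj⟩)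
        · have := (Finset.mem_Ico.mp (descentSet_subset_Ico _ σ hd)).2
          omega
        · have := (Finset.mem_Ico.mp (descentSet_subset_Ico _ τ hd)).1
          omega
    · -- i < j
      have hd1 : 1 ≤ j - i := by omega
      have hd2 : j - i < n - i := by omega
      have hmem : j ∈ descentSet n π ↔ j - i ∈ descentSet (n - i) τ := by
        rw [mem_descentSet_iff π hj1 hj2, mem_descentSet_iff τ hd1 hd2]
        rw [hπ, joinPerm_apply_high _ (by simp; omega),
          joinPerm_apply_high (⟨j - 1, by omega⟩ : Fin n) (by simp; omega)]
        rw [Subtype.coe_lt_coe, OrderIso.lt_iff_lt]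
        constructor
        · intro h
          convert h using 2 <;> first | rfl | (ext; simp; omega)
        · intro h
          convert h using 2 <;> first | rfl | (ext; simp; omega)
      constructor
      · rintro ⟨hd, -⟩
        exact Or.inr ⟨j - i, hmem.mp hd, by omega⟩
      · rintro (hd | ⟨d, hd, hdj⟩)
        · have := (Finset.mem_Ico.mp (descentSet_subset_Ico _ σ hd)).2
          omega
        · have hdi : d = j - i := by omega
          subst hdi
          exact ⟨hmem.mpr hd, by omega⟩
  · -- j out of range
    constructor
    · rintro ⟨hd, -⟩
      have := Finset.mem_Ico.mp (descentSet_subset_Ico _ π hd)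
      omega
    · rintro (hd | ⟨d, hd, hdj⟩)
      · have := Finset.mem_Ico.mp (descentSet_subset_Ico _ σ hd)
        omega
      · have := Finset.mem_Ico.mp (descentSet_subset_Ico _ τ hd)
        omega

lemma descentSet_stdLow (hii : i ≤ n) (π : Equiv.Perm (Fin n)) :
    descentSet i (stdLow hii π) = (descentSet n π).filter (· < i) := by
  ext j
  rw [Finset.mem_filter]
  by_cases hj : 1 ≤ j ∧ j < i
  · obtain ⟨hj1, hj2⟩ := hj
    rw [mem_descentSet_iff _ hj1 hj2]
    have hlt : stdLow hii π ⟨j, hj2⟩ < stdLow hii π ⟨j - 1, by omega⟩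
        ↔ π ⟨j, by omega⟩ < π ⟨j - 1, by omega⟩ := by
      rw [stdLow_lt_iff]
      unfold lowMap
      constructor
      · intro h
        convert h using 2 <;> rfl
      · intro h
        convert h using 2 <;> rfl
    rw [hlt, ← mem_descentSet_iff π hj1 (by omega)]
    constructor
    · exact fun h => ⟨h, hj2⟩
    · exact fun h => h.1
  · constructor
    · intro hd
      have := Finset.mem_Ico.mp (descentSet_subset_Ico _ _ hd)
      omega
    · rintro ⟨hd, hlt⟩
      have := Finset.mem_Ico.mp (descentSet_subset_Ico _ _ hd)
      omega

lemma descentSet_stdHigh (π : Equiv.Perm (Fin n)) :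
    descentSet (n - i) (stdHigh i π) = ((descentSet n π).filter (i < ·)).image (· - i) := by
  ext j
  rw [Finset.mem_image]
  by_cases hj : 1 ≤ j ∧ j < n - i
  · obtain ⟨hj1, hj2⟩ := hj
    rw [mem_descentSet_iff _ hj1 hj2]
    have hlt : stdHigh i π ⟨j, hj2⟩ < stdHigh i π ⟨j - 1, by omega⟩
        ↔ π ⟨i + j, by omega⟩ < π ⟨(i + j) - 1, by omega⟩ := by
      rw [stdHigh_lt_iff]
      unfold highMap
      constructor
      · intro h
        convert h using 2 <;> ext <;> simp <;> omega
      · intro h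
        convert h using 2 <;> ext <;> simp <;> omega
    rw [hlt, ← mem_descentSet_iff π (by omega) (by omega)]
    constructor
    · intro h
      exact ⟨i + j, Finset.mem_filter.mpr ⟨h, by omega⟩, by omega⟩
    · rintro ⟨s, hs, rfl⟩
      obtain ⟨hs1, hs2⟩ := Finset.mem_filter.mp hs
      have : s = i + (s - i) := by omega
      rwa [← this]
  · constructor
    · intro hd
      have := Finset.mem_Ico.mp (descentSet_subset_Ico _ _ hd)
      omega
    · rintro ⟨s, hs, rfl⟩
      obtain ⟨hs1, hs2⟩ := Finset.mem_filter.mp hs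
      have := Finset.mem_Ico.mp (descentSet_subset_Ico _ _ hs1)
      omega

end Descents

lemma beta_toggle {n i : ℕ} (h1 : 1 ≤ i) (h2 : i < n) {S : Finset ℕ}
    (hS : S ⊆ Finset.Ico 1 n) (hiS : i ∉ S) :
    beta n S + beta n (insert i S)
      = n.choose i * beta i (S.filter (· < i))
          * beta (n - i) ((S.filter (fun s => i < s)).image (· - i)) := by
  classical
  have hii : i ≤ n := le_of_lt h2
  have hpred : ∀ π : Equiv.Perm (Fin n),
      (descentSet n π = S ∨ descentSet n π = insert i S) ↔ (descentSet n π \ {i} = S) := by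
    intro π
    constructor
    · rintro (h | h)
      · rw [h, Finset.sdiff_singleton_eq_erase, Finset.erase_eq_of_notMem hiS]
      · rw [h, Finset.sdiff_singleton_eq_erase, Finset.erase_insert hiS]
    · intro h
      by_cases hi : i ∈ descentSet n π
      · right
        rw [← h, Finset.sdiff_singleton_eq_erase, Finset.insert_erase hi]
      · left
        rw [← h, Finset.sdiff_singleton_eq_erase, Finset.erase_eq_of_notMem hi]
  have hdisj : Disjoint
      (Finset.univ.filter fun π : Equiv.Perm (Fin n) => descentSet n π = S)
      (Finset.univ.filter fun π : Equiv.Perm (Fin n) => descentSet n π = insert i S) := by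
    rw [Finset.disjoint_left]
    intro π hπ1 hπ2
    rw [Finset.mem_filter] at hπ1 hπ2
    have : S = insert i S := hπ1.2 ▸ hπ2.2
    exact hiS (this ▸ Finset.mem_insert_self i S)
  have step1 : beta n S + beta n (insert i S)
      = (Finset.univ.filter fun π : Equiv.Perm (Fin n) => descentSet n π \ {i} = S).card := by
    unfold beta
    rw [← Finset.card_union_of_disjoint hdisj, ← Finset.filter_or]
    congr 1
    exact Finset.filter_congr fun π _ => hpred π
  rw [step1]
  have step2 : (Finset.univ.filter fun π : Equiv.Perm (Fin n) => descentSet n π \ {i} = S).card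
      = ((Finset.univ.powersetCard i : Finset (Finset (Fin n))) ×ˢ
         ((Finset.univ.filter fun σ : Equiv.Perm (Fin i) =>
            descentSet i σ = S.filter (· < i)) ×ˢ
          (Finset.univ.filter fun τ : Equiv.Perm (Fin (n - i)) =>
            descentSet (n - i) τ = (S.filter (fun s => i < s)).image (· - i)))).card := by
    refine Finset.card_bij' (fun π _ => (lowSet hii π, stdLow hii π, stdHigh i π))
      (fun b hb => joinPerm b.1 b.1ᶜ
        (Finset.mem_powersetCard_univ.mp (Finset.mem_product.mp hb).1)
        (by rw [Finset.card_compl,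
            Finset.mem_powersetCard_univ.mp (Finset.mem_product.mp hb).1, Fintype.card_fin])
        rfl b.2.1 b.2.2) ?hi ?hj ?left ?right
    case hi =>
      -- forward membership
      intro π hπ
      rw [Finset.mem_filter] at hπ
      have hπ2 := hπ.2
      rw [Finset.mem_product]
      constructor
      · exact Finset.mem_powersetCard_univ.mpr (card_lowSet hii π)
      rw [Finset.mem_product]
      constructor
      · rw [Finset.mem_filter]
        refine ⟨Finset.mem_univ _, ?_⟩
        rw [descentSet_stdLow, ← hπ2]
        ext j
        simp only [Finset.mem_filter, Finset.mem_sdiff, Finset.mem_singleton]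
        constructor
        · rintro ⟨h, h'⟩
          exact ⟨⟨h, by omega⟩, h'⟩
        · rintro ⟨⟨h, -⟩, h'⟩
          exact ⟨h, h'⟩
      · rw [Finset.mem_filter]
        refine ⟨Finset.mem_univ _, ?_⟩
        rw [descentSet_stdHigh, ← hπ2]
        congr 1
        ext j
        simp only [Finset.mem_filter, Finset.mem_sdiff, Finset.mem_singleton]
        constructor
        · rintro ⟨h, h'⟩
          exact ⟨⟨h, by omega⟩, h'⟩
        · rintro ⟨⟨h, -⟩, h'⟩
          exact ⟨h, h'⟩
    case hj =>
      -- backward membership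
      intro b hb
      obtain ⟨T, σ, τ⟩ := b
      rw [Finset.mem_product] at hb
      obtain ⟨hb1, hb2⟩ := hb
      rw [Finset.mem_product] at hb2
      obtain ⟨hb21, hb22⟩ := hb2
      rw [Finset.mem_filter] at hb21 hb22
      rw [Finset.mem_filter]
      refine ⟨Finset.mem_univ _, ?_⟩
      rw [descentSet_joinPerm h1 h2, hb21.2, hb22.2, Finset.image_image]
      ext j
      simp only [Finset.mem_union, Finset.mem_filter, Finset.mem_image, Function.comp_apply]
      constructor
      · rintro (⟨h, -⟩ | ⟨s, ⟨hs, hsi⟩, rfl⟩)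
        · exact h
        · have : s - i + i = s := by omega
          rwa [this]
      · intro hj
        have hj1 := Finset.mem_Ico.mp (hS hj)
        have hjne : j ≠ i := fun he => hiS (he ▸ hj)
        by_cases hlt : j < i
        · exact Or.inl ⟨hj, hlt⟩
        · exact Or.inr ⟨j, ⟨hj, by omega⟩, by omega⟩
    case left =>
      -- left inverse
      intro π hπ
      exact join_std hii π _ _ rfl
    case right =>
      -- right inverse
      intro b hb
      obtain ⟨T, σ, τ⟩ := b
      dsimp only
      rw [lowSet_joinPerm hii, stdLow_joinPerm hii, stdHigh_joinPerm]
  rw [step2, Finset.card_product, Finset.card_product, Finset.card_powersetCard,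
    Finset.card_univ, Fintype.card_fin]
  unfold beta
  ring

section Choose

lemma cast_choose_two_pow_sum (u v k : ℕ) :
    (((2^u + 2^v).choose k : ZMod 2))
      = (if k = 2^u + 2^v then 1 else 0) + (if k = 2^u then 1 else 0)
        + (if k = 2^v then 1 else 0) + (if k = 0 then 1 else 0) := by
  have h : ((X + 1 : Polynomial (ZMod 2))) ^ (2^u + 2^v)
      = X^(2^u + 2^v) + X^(2^u) + X^(2^v) + 1 := by
    rw [pow_add, add_pow_char_pow, add_pow_char_pow, one_pow]
    ring
  have := Polynomial.coeff_X_add_one_pow (ZMod 2) (2^u + 2^v) k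
  rw [h] at this
  rw [← this]
  simp [Polynomial.coeff_add, Polynomial.coeff_X_pow, Polynomial.coeff_one]

lemma cast_choose_three_pow_sum (a b c k : ℕ) :
    (((2^a + 2^b + 2^c).choose k : ZMod 2))
      = (if k = 2^a + 2^b + 2^c then 1 else 0)
        + (if k = 2^a + 2^b then 1 else 0) + (if k = 2^a + 2^c then 1 else 0)
        + (if k = 2^b + 2^c then 1 else 0)
        + (if k = 2^a then 1 else 0) + (if k = 2^b then 1 else 0)
        + (if k = 2^c then 1 else 0) + (if k = 0 then 1 else 0) := by
  have h : ((X + 1 : Polynomial (ZMod 2))) ^ (2^a + 2^b + 2^c)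
      = X^(2^a + 2^b + 2^c) + X^(2^a + 2^b) + X^(2^a + 2^c) + X^(2^b + 2^c)
        + X^(2^a) + X^(2^b) + X^(2^c) + 1 := by
    rw [pow_add, pow_add, add_pow_char_pow, add_pow_char_pow, add_pow_char_pow, one_pow]
    ring
  have := Polynomial.coeff_X_add_one_pow (ZMod 2) (2^a + 2^b + 2^c) k
  rw [h] at this
  rw [← this]
  simp [Polynomial.coeff_add, Polynomial.coeff_X_pow, Polynomial.coeff_one]

lemma not_two_dvd_of_cast_one {m : ℕ} (h : ((m : ZMod 2)) = 1) : ¬ 2 ∣ m := by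
  intro hdvd
  rw [(ZMod.natCast_eq_zero_iff m 2).mpr hdvd] at h
  exact zero_ne_one h

lemma two_dvd_of_cast_zero {m : ℕ} (h : ((m : ZMod 2)) = 0) : 2 ∣ m :=
  (ZMod.natCast_eq_zero_iff m 2).mp h

lemma even_choose_two_pow_sum {u v k : ℕ} (hk0 : k ≠ 0) (hku : k ≠ 2^u) (hkv : k ≠ 2^v)
    (hkn : k ≠ 2^u + 2^v) : 2 ∣ (2^u + 2^v).choose k := by
  apply two_dvd_of_cast_zero
  rw [cast_choose_two_pow_sum]
  rw [if_neg (by omega), if_neg (by omega), if_neg (by omega), if_neg hk0]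
  ring

lemma odd_choose_two_pow_sum_left {u v : ℕ} (huv : u < v) :
    ¬ 2 ∣ (2^u + 2^v).choose (2^u) := by
  apply not_two_dvd_of_cast_one
  rw [cast_choose_two_pow_sum]
  have h1 : (0:ℕ) < 2^u := Nat.pow_pos (n := u) (by norm_num)
  have h2 : 2^u < 2^v := Nat.pow_lt_pow_right (by norm_num) huv
  rw [if_neg (by omega), if_pos rfl, if_neg (by omega), if_neg (by omega)]
  ring

lemma odd_choose_two_pow_sum_right {u v : ℕ} (huv : u < v) :
    ¬ 2 ∣ (2^u + 2^v).choose (2^v) := by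
  apply not_two_dvd_of_cast_one
  rw [cast_choose_two_pow_sum]
  have h1 : (0:ℕ) < 2^u := Nat.pow_pos (n := u) (by norm_num)
  have h2 : 2^u < 2^v := Nat.pow_lt_pow_right (by norm_num) huv
  rw [if_neg (by omega), if_neg (by omega), if_pos rfl, if_neg (by omega)]
  ring

lemma even_choose_three_pow_sum {a b c k : ℕ}
    (h : k ≠ 0 ∧ k ≠ 2^a ∧ k ≠ 2^b ∧ k ≠ 2^c ∧ k ≠ 2^a + 2^b ∧ k ≠ 2^a + 2^c
      ∧ k ≠ 2^b + 2^c ∧ k ≠ 2^a + 2^b + 2^c) : 2 ∣ (2^a + 2^b + 2^c).choose k := by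
  obtain ⟨h0, h1, h2, h3, h4, h5, h6, h7⟩ := h
  apply two_dvd_of_cast_zero
  rw [cast_choose_three_pow_sum]
  rw [if_neg (by omega), if_neg (by omega), if_neg (by omega), if_neg (by omega),
    if_neg (by omega), if_neg (by omega), if_neg (by omega), if_neg h0]
  ring

lemma odd_choose_three_pow_digit {a b c t : ℕ} (hab : a < b) (hbc : b < c)
    (ht : t = 2^a ∨ t = 2^b ∨ t = 2^c) : ¬ 2 ∣ (2^a + 2^b + 2^c).choose t := by
  have hA : (0:ℕ) < 2^a := Nat.pow_pos (n := a) (by norm_num)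
  have hAB : 2 * 2^a ≤ 2^b := by
    calc 2 * 2^a = 2^(a+1) := by ring
    _ ≤ 2^b := Nat.pow_le_pow_right (by norm_num) (by omega)
  have hBC : 2 * 2^b ≤ 2^c := by
    calc 2 * 2^b = 2^(b+1) := by ring
    _ ≤ 2^c := Nat.pow_le_pow_right (by norm_num) (by omega)
  apply not_two_dvd_of_cast_one
  rw [cast_choose_three_pow_sum]
  rcases ht with rfl | rfl | rfl
  · rw [if_neg (by omega), if_neg (by omega), if_neg (by omega), if_neg (by omega),
      if_pos rfl, if_neg (by omega), if_neg (by omega), if_neg (by omega)]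
    ring
  · rw [if_neg (by omega), if_neg (by omega), if_neg (by omega), if_neg (by omega),
      if_neg (by omega), if_pos rfl, if_neg (by omega), if_neg (by omega)]
    ring
  · rw [if_neg (by omega), if_neg (by omega), if_neg (by omega), if_neg (by omega),
      if_neg (by omega), if_neg (by omega), if_pos rfl, if_neg (by omega)]
    ring

lemma dvd_choose_of_dvd_left {p n k : ℕ} (hp : p.Prime) (hpn : p ∣ n) (hpk : ¬ p ∣ k)
    (hkn : k ≤ n) : p ∣ n.choose k := by
  have hk0 : k ≠ 0 := by rintro rfl; exact hpk (dvd_zero p)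
  have hn0 : n ≠ 0 := by omega
  obtain ⟨m, rfl⟩ : ∃ m, n = m + 1 := ⟨n - 1, by omega⟩
  obtain ⟨l, rfl⟩ : ∃ l, k = l + 1 := ⟨k - 1, by omega⟩
  have hkey := Nat.add_one_mul_choose_eq m l
  have hdvd : p ∣ (m + 1).choose (l + 1) * (l + 1) := by
    rw [← hkey]
    exact Dvd.dvd.mul_right hpn _
  rcases (Nat.Prime.dvd_mul hp).mp hdvd with h | h
  · exact h
  · exact absurd h hpk

end Choose

section Toggle

def tog (t : ℕ) (X : Finset ℕ) : Finset ℕ := if t ∈ X then X.erase t else insert t X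

lemma tog_tog (t : ℕ) (X : Finset ℕ) : tog t (tog t X) = X := by
  by_cases h : t ∈ X
  · have e1 : tog t X = X.erase t := by rw [tog, if_pos h]
    rw [e1, tog, if_neg (Finset.notMem_erase t X), Finset.insert_erase h]
  · have e1 : tog t X = insert t X := by rw [tog, if_neg h]
    rw [e1, tog, if_pos (Finset.mem_insert_self t X), Finset.erase_insert h]

lemma mem_tog_self (t : ℕ) (X : Finset ℕ) : t ∈ tog t X ↔ t ∉ X := by
  by_cases h : t ∈ X <;> simp [tog, h]

lemma mem_tog_of_ne {t w : ℕ} (X : Finset ℕ) (h : w ≠ t) : w ∈ tog t X ↔ w ∈ X := by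
  by_cases ht : t ∈ X <;> simp [tog, ht, Finset.mem_erase, Finset.mem_insert, h]

lemma tog_comm {t u : ℕ} (h : t ≠ u) (X : Finset ℕ) : tog t (tog u X) = tog u (tog t X) := by
  ext w
  by_cases hwt : w = t
  · subst hwt
    rw [mem_tog_self, not_congr (mem_tog_of_ne _ h), mem_tog_of_ne _ h, mem_tog_self]
  · by_cases hwu : w = u
    · subst hwu
      rw [mem_tog_of_ne _ (Ne.symm h), mem_tog_self, mem_tog_self,
        not_congr (mem_tog_of_ne _ (Ne.symm h))]
    · rw [mem_tog_of_ne _ hwt, mem_tog_of_ne _ hwu, mem_tog_of_ne _ hwu, mem_tog_of_ne _ hwt]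

lemma tog_subset {n t : ℕ} {X : Finset ℕ} (ht : t ∈ Finset.Ico 1 n) (hX : X ⊆ Finset.Ico 1 n) :
    tog t X ⊆ Finset.Ico 1 n := by
  by_cases h : t ∈ X
  · rw [tog, if_pos h]
    exact (Finset.erase_subset _ _).trans hX
  · rw [tog, if_neg h]
    exact Finset.insert_subset ht hX

lemma beta_tog {N t : ℕ} (h1 : 1 ≤ t) (h2 : t < N) {S : Finset ℕ}
    (hS : S ⊆ Finset.Ico 1 N) :
    beta N S + beta N (tog t S)
      = N.choose t * beta t ((S.erase t).filter (· < t))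
          * beta (N - t) (((S.erase t).filter (fun s => t < s)).image (· - t)) := by
  unfold tog
  by_cases h : t ∈ S
  · rw [if_pos h]
    have key := beta_toggle h1 h2 ((Finset.erase_subset _ _).trans hS) (Finset.notMem_erase t S)
    rw [Finset.insert_erase h] at key
    rw [Nat.add_comm]
    convert key using 3 <;> rw [Finset.erase_idem]
  · rw [if_neg h]
    have key := beta_toggle h1 h2 hS h
    rw [Finset.erase_eq_of_notMem h]
    exact key

end Toggle

section BetaParity

lemma beta_two_pow_odd (x : ℕ) (T : Finset ℕ) (hT : T ⊆ Finset.Ico 1 (2^x)) :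
    beta (2^x) T % 2 = 1 := by
  induction T using Finset.strongInduction with
  | _ T ih =>
    rcases T.eq_empty_or_nonempty with rfl | ⟨t, ht⟩
    · rw [beta_empty]
    · have htIco := Finset.mem_Ico.mp (hT ht)
      have hsub : T.erase t ⊂ T := Finset.erase_ssubset ht
      have hT' : T.erase t ⊆ Finset.Ico 1 (2^x) := (Finset.erase_subset _ _).trans hT
      have key := beta_toggle (i := t) htIco.1 htIco.2 hT' (Finset.notMem_erase t T)
      rw [Finset.insert_erase ht] at key
      have hodd := ih _ hsub hT'
      have heven : 2 ∣ (2^x).choose t :=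
        Nat.Prime.dvd_choose_pow Nat.prime_two (by omega) (by omega)
      have hdvd : 2 ∣ (2^x).choose t * beta t ((T.erase t).filter (· < t))
          * beta (2^x - t) (((T.erase t).filter (fun s => t < s)).image (· - t)) :=
        (heven.mul_right _).mul_right _
      obtain ⟨m, hm⟩ := hdvd
      omega

lemma beta_two_pow_sum_parity {u v : ℕ} (huv : u < v) (T : Finset ℕ)
    (hT : T ⊆ Finset.Ico 1 (2^u + 2^v)) :
    beta (2^u + 2^v) T % 2
      = (1 + (if 2^u ∈ T then 1 else 0) + (if 2^v ∈ T then 1 else 0)) % 2 := by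
  have hu0 : (0:ℕ) < 2^u := Nat.pow_pos (n := u) (by norm_num)
  have huv' : (2:ℕ)^u < 2^v := Nat.pow_lt_pow_right (by norm_num) huv
  induction T using Finset.strongInduction with
  | _ T ih =>
    by_cases hex : ∃ t ∈ T, t ≠ 2^u ∧ t ≠ 2^v
    · obtain ⟨t, ht, htu, htv⟩ := hex
      have htIco := Finset.mem_Ico.mp (hT ht)
      have hsub : T.erase t ⊂ T := Finset.erase_ssubset ht
      have hT' : T.erase t ⊆ Finset.Ico 1 (2^u + 2^v) := (Finset.erase_subset _ _).trans hT
      have key := beta_toggle (i := t) htIco.1 htIco.2 hT' (Finset.notMem_erase t T)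
      rw [Finset.insert_erase ht] at key
      have hih := ih _ hsub hT'
      have heven : 2 ∣ (2^u + 2^v).choose t :=
        even_choose_two_pow_sum (by omega) htu htv (by omega)
      have hdvd : 2 ∣ (2^u + 2^v).choose t * beta t ((T.erase t).filter (· < t))
          * beta (2^u + 2^v - t) (((T.erase t).filter (fun s => t < s)).image (· - t)) :=
        (heven.mul_right _).mul_right _
      obtain ⟨m, hm⟩ := hdvd
      have hmu : (2^u ∈ T.erase t) ↔ (2^u ∈ T) := by
        rw [Finset.mem_erase]
        exact ⟨fun h => h.2, fun h => ⟨fun he => htu he.symm, h⟩⟩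
      have hmv : (2^v ∈ T.erase t) ↔ (2^v ∈ T) := by
        rw [Finset.mem_erase]
        exact ⟨fun h => h.2, fun h => ⟨fun he => htv he.symm, h⟩⟩
      by_cases h2u : 2^u ∈ T <;> by_cases h2v : 2^v ∈ T <;>
        simp only [h2u, h2v, hmu, hmv, if_true, if_false] at hih ⊢ <;> omega
    · push_neg at hex
      have hTsub : T ⊆ {2^u, 2^v} := by
        intro s hs
        rcases eq_or_ne s (2^u) with rfl | hsu
        · exact Finset.mem_insert_self _ _
        · rw [hex s hs hsu]
          exact Finset.mem_insert_of_mem (Finset.mem_singleton_self _)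
      -- auxiliary values
      have hval_v : beta (2^u + 2^v) {2^v} % 2 = 0 := by
        have key := beta_toggle (n := 2^u + 2^v) (i := 2^v) (by omega) (by omega)
          (S := (∅ : Finset ℕ)) (by simp) (Finset.notMem_empty _)
        rw [show insert ((2:ℕ)^v) (∅ : Finset ℕ) = {2^v} from rfl] at key
        rw [Finset.filter_empty, Finset.filter_empty, Finset.image_empty] at key
        simp only [beta_empty, mul_one] at key
        have hodd : ¬ 2 ∣ (2^u + 2^v).choose (2^v) := odd_choose_two_pow_sum_right huv
        omega
      by_cases h2u : 2^u ∈ T <;> by_cases h2v : 2^v ∈ T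
      · -- T = {2^u, 2^v}
        have hTeq : T = {2^u, 2^v} := by
          apply Finset.Subset.antisymm hTsub
          intro s hs
          rcases Finset.mem_insert.mp hs with rfl | hs'
          · exact h2u
          · rw [Finset.mem_singleton.mp hs']; exact h2v
        subst hTeq
        have key := beta_toggle (n := 2^u + 2^v) (i := 2^u) (by omega) (by omega)
          (S := ({2^v} : Finset ℕ))
          (by intro s hs; rw [Finset.mem_singleton.mp hs]; exact Finset.mem_Ico.mpr ⟨by omega, by omega⟩)
          (by rw [Finset.mem_singleton]; omega)
        have hfil1 : ({2^v} : Finset ℕ).filter (· < 2^u) = ∅ := by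
          rw [Finset.filter_singleton, if_neg (by omega)]
        have hfil2 : ({2^v} : Finset ℕ).filter (fun s => 2^u < s) = {2^v} := by
          rw [Finset.filter_singleton, if_pos (by omega)]
        rw [hfil1, hfil2, Finset.image_singleton, beta_empty] at key
        have hsub2 : (2:ℕ)^u + 2^v - 2^u = 2^v := by omega
        rw [hsub2] at key
        have hb2 : beta (2^v) {2^v - 2^u} % 2 = 1 := by
          apply beta_two_pow_odd
          intro s hs
          rw [Finset.mem_singleton.mp hs]
          exact Finset.mem_Ico.mpr ⟨by omega, by omega⟩
        have hodd : ¬ 2 ∣ (2^u + 2^v).choose (2^u) := odd_choose_two_pow_sum_left huv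
        have hpair : insert (2^u) ({2^v} : Finset ℕ) = {2^u, 2^v} := rfl
        rw [hpair] at key
        simp only [mul_one] at key
        simp only [h2u, h2v, if_true]
        have hco : (2^u + 2^v).choose (2^u) % 2 = 1 := by omega
        have hprod : ((2^u + 2^v).choose (2^u) * beta (2^v) {2^v - 2^u}) % 2 = 1 := by
          rw [Nat.mul_mod, hco, hb2]
        omega
      · -- T = {2^u}
        have hTeq : T = {2^u} := by
          apply Finset.Subset.antisymm
          · intro s hs
            rcases Finset.mem_insert.mp (hTsub hs) with rfl | hs'
            · exact Finset.mem_singleton_self _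
            · rw [Finset.mem_singleton.mp hs'] at hs; exact absurd hs h2v
          · intro s hs; rw [Finset.mem_singleton.mp hs]; exact h2u
        subst hTeq
        have key := beta_toggle (n := 2^u + 2^v) (i := 2^u) (by omega) (by omega)
          (S := (∅ : Finset ℕ)) (by simp) (Finset.notMem_empty _)
        rw [show insert ((2:ℕ)^u) (∅ : Finset ℕ) = {2^u} from rfl] at key
        rw [Finset.filter_empty, Finset.filter_empty, Finset.image_empty] at key
        simp only [beta_empty, mul_one] at key
        have hodd : ¬ 2 ∣ (2^u + 2^v).choose (2^u) := odd_choose_two_pow_sum_left huv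
        simp only [h2u, h2v, if_true, if_false]
        omega
      · -- T = {2^v}
        have hTeq : T = {2^v} := by
          apply Finset.Subset.antisymm
          · intro s hs
            rcases Finset.mem_insert.mp (hTsub hs) with rfl | hs'
            · exact absurd hs h2u
            · exact hs'
          · intro s hs; rw [Finset.mem_singleton.mp hs]; exact h2v
        subst hTeq
        simp only [h2u, h2v, if_true, if_false]
        omega
      · -- T = ∅
        have hTeq : T = ∅ := by
          rw [Finset.eq_empty_iff_forall_notMem]
          intro s hs
          rcases Finset.mem_insert.mp (hTsub hs) with rfl | hs'
          · exact h2u hs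
          · rw [Finset.mem_singleton.mp hs'] at hs; exact h2v hs
        subst hTeq
        rw [beta_empty]
        simp

end BetaParity

section ModTwoP

lemma odd_dvd_mod_two_mul {p K : ℕ} (hpodd : Odd p) (hK : Odd K) (hpK : p ∣ K) :
    K % (2 * p) = p := by
  have hp0 : 0 < p := hpodd.pos
  have hrlt : K % (2 * p) < 2 * p := Nat.mod_lt _ (by omega)
  have hdvd_r : p ∣ K % (2 * p) := (Nat.dvd_mod_iff ⟨2, by ring⟩).mpr hpK
  obtain ⟨q, hq⟩ := hdvd_r
  have hmod := Nat.div_add_mod K (2 * p)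
  have hKodd := Nat.odd_iff.mp hK
  have hq2 : q < 2 := by
    by_contra hq2
    push_neg at hq2
    have : p * 2 ≤ p * q := Nat.mul_le_mul_left p hq2
    omega
  interval_cases q
  · exfalso
    have h2pK : 2 * p ∣ K := Nat.dvd_of_mod_eq_zero (by omega)
    obtain ⟨r, hr⟩ := h2pK
    have h2K : 2 ∣ K := ⟨p * r, by rw [hr]; ring⟩
    omega
  · omega

lemma pow_eq_pow_of_modEq' {M : Type*} [Monoid M] {ζ : M} {m : ℕ} (hζ : ζ ^ m = 1) {x y : ℕ}
    (h : x % m = y % m) : ζ ^ x = ζ ^ y := by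
  conv_lhs => rw [← Nat.div_add_mod x m]
  conv_rhs => rw [← Nat.div_add_mod y m]
  simp only [pow_add, pow_mul, hζ, one_pow, one_mul, h]

lemma toggle_digit_mod {p : ℕ} (hp : p.Prime) (hpodd : Odd p) {N t m₁ m₂ x : ℕ}
    (hm : m₁ < m₂) (ht : t = 2^x) (hNsum : N = t + (2^m₁ + 2^m₂))
    (hchoose_odd : ¬ 2 ∣ N.choose t) (hpt : ¬ p ∣ t) (hpN : p ∣ N)
    {S : Finset ℕ} (hS : S ⊆ Finset.Ico 1 N) (hiff : ((t + 2^m₁ ∈ S) ↔ (t + 2^m₂ ∈ S))) :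
    (beta N S + beta N (tog t S)) % (2 * p) = p := by
  have hm10 : (0:ℕ) < 2^m₁ := Nat.pow_pos (by norm_num)
  have hm12 : (2:ℕ)^m₁ < 2^m₂ := Nat.pow_lt_pow_right (by norm_num) hm
  have ht0 : 0 < t := by rw [ht]; exact Nat.pow_pos (by norm_num)
  have htN : t < N := by omega
  rw [beta_tog ht0 htN hS]
  apply odd_dvd_mod_two_mul hpodd
  · refine Odd.mul (Odd.mul ?_ ?_) ?_
    · rw [Nat.odd_iff]
      omega
    · rw [Nat.odd_iff]
      subst ht
      apply beta_two_pow_odd x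
      intro s hs
      rw [Finset.mem_filter, Finset.mem_erase] at hs
      obtain ⟨⟨hs1, hs2⟩, hs3⟩ := hs
      have := Finset.mem_Ico.mp (hS hs2)
      exact Finset.mem_Ico.mpr ⟨by omega, hs3⟩
    · have hNt : N - t = 2^m₁ + 2^m₂ := by omega
      rw [Nat.odd_iff, hNt]
      have hHsub : ((S.erase t).filter (fun s => t < s)).image (· - t)
          ⊆ Finset.Ico 1 (2^m₁ + 2^m₂) := by
        intro s hs
        rw [Finset.mem_image] at hs
        obtain ⟨w, hw, rfl⟩ := hs
        rw [Finset.mem_filter, Finset.mem_erase] at hw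
        obtain ⟨⟨hw1, hw2⟩, hw3⟩ := hw
        have := Finset.mem_Ico.mp (hS hw2)
        exact Finset.mem_Ico.mpr ⟨by omega, by omega⟩
      rw [beta_two_pow_sum_parity hm _ hHsub]
      have e1 : (2^m₁ ∈ ((S.erase t).filter (fun s => t < s)).image (· - t))
          ↔ (t + 2^m₁ ∈ S) := by
        rw [Finset.mem_image]
        constructor
        · rintro ⟨w, hw, hwt⟩
          rw [Finset.mem_filter, Finset.mem_erase] at hw
          obtain ⟨⟨hw1, hw2⟩, hw3⟩ := hw
          have : w = t + 2^m₁ := by omega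
          rwa [← this]
        · intro hmem
          exact ⟨t + 2^m₁, Finset.mem_filter.mpr ⟨Finset.mem_erase.mpr ⟨by omega, hmem⟩,
            by omega⟩, by omega⟩
      have e2 : (2^m₂ ∈ ((S.erase t).filter (fun s => t < s)).image (· - t))
          ↔ (t + 2^m₂ ∈ S) := by
        rw [Finset.mem_image]
        constructor
        · rintro ⟨w, hw, hwt⟩
          rw [Finset.mem_filter, Finset.mem_erase] at hw
          obtain ⟨⟨hw1, hw2⟩, hw3⟩ := hw
          have : w = t + 2^m₂ := by omega
          rwa [← this]
        · intro hmem
          exact ⟨t + 2^m₂, Finset.mem_filter.mpr ⟨Finset.mem_erase.mpr ⟨by omega, hmem⟩,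
            by omega⟩, by omega⟩
      simp only [e1, e2]
      by_cases hmem : t + 2^m₁ ∈ S
      · rw [if_pos hmem, if_pos (hiff.mp hmem)]
      · rw [if_neg hmem, if_neg (fun h => hmem (hiff.mpr h))]
  · exact ((dvd_choose_of_dvd_left hp hpN hpt htN.le).mul_right _).mul_right _

lemma toggle_even_mod {p N t : ℕ} (hpodd : Odd p) (h1 : 1 ≤ t) (h2 : t < N)
    (h2dvd : 2 ∣ N.choose t) (hpdvd : p ∣ N.choose t) {S : Finset ℕ}
    (hS : S ⊆ Finset.Ico 1 N) :
    (beta N S + beta N (tog t S)) % (2 * p) = 0 := by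
  rw [beta_tog h1 h2 hS]
  have hco : Nat.Coprime 2 p := (Nat.Prime.coprime_iff_not_dvd Nat.prime_two).mpr
    (by rw [Nat.odd_iff] at hpodd; omega)
  have h2p : 2 * p ∣ N.choose t := Nat.Coprime.mul_dvd_of_dvd_of_dvd hco h2dvd hpdvd
  obtain ⟨q, hq⟩ := (h2p.mul_right _).mul_right _
  rw [hq, Nat.mul_mod_right]

end ModTwoP

def sel (P1 P2 P3 x1 x2 x3 : ℕ) (S : Finset ℕ) : ℕ :=
  if (P1 ∈ S ↔ P2 ∈ S) then x1 else if (P1 ∈ S ↔ P3 ∈ S) then x2 else x3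

/-- Let `p` be an odd prime for which the multiplicative order `g` of `2` modulo
`p` is even, and let `n = 2^c + 2^b + 2^a` with `c > b > a ≥ 0` and `n ≥ 11`.
If the residues of `a, b, c` modulo `g` form the multiset `{1, g/2, g/2}`, then
`Φ_{2p}` divides `Q_n`. -/
theorem cyclotomic_two_p_dvd_three_digits_one (p a b c g : ℕ) (hp : p.Prime)
    (hpodd : Odd p) (hg : g = orderOf (2 : ZMod p)) (hgeven : Even g)
    (hab : a < b) (hbc : b < c) (hn : 11 ≤ 2 ^ c + 2 ^ b + 2 ^ a)
    (hcong : ({a % g, b % g, c % g} : Multiset ℕ) = {1, g / 2, g / 2}) :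
    Polynomial.cyclotomic (2 * p) ℤ ∣ Q (2 ^ c + 2 ^ b + 2 ^ a) := by
  classical
  haveI : Fact p.Prime := ⟨hp⟩
  have hp2 : p % 2 = 1 := Nat.odd_iff.mp hpodd
  have hp3 : 3 ≤ p := by have := hp.two_le; omega
  have h2ne : (2 : ZMod p) ≠ 0 := by
    intro h
    have h2 : ((2:ℕ) : ZMod p) = 0 := by exact_mod_cast h
    rw [ZMod.natCast_eq_zero_iff] at h2
    have := (Nat.prime_dvd_prime_iff_eq hp Nat.prime_two).mp h2
    omega
  have hford : (2 : ZMod p) ^ (p - 1) = 1 := ZMod.pow_card_sub_one_eq_one h2ne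
  have hgdvd : g ∣ p - 1 := by rw [hg]; exact orderOf_dvd_of_pow_eq_one hford
  have hg0 : g ≠ 0 := by
    intro h0
    rw [h0] at hgdvd
    have := Nat.eq_zero_of_zero_dvd hgdvd
    omega
  have hg2 : 2 ≤ g := by
    rcases hgeven with ⟨w, hw⟩
    omega
  have hamem : a % g ∈ ({1, g / 2, g / 2} : Multiset ℕ) := by
    rw [← hcong]; simp
  have ha1 : 1 ≤ a := by
    by_contra h
    push_neg at h
    have ha0 : a = 0 := by omega
    rw [ha0, Nat.zero_mod] at hamem
    simp only [Multiset.insert_eq_cons, Multiset.mem_cons, Multiset.mem_singleton] at hamem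
    have : 1 ≤ g / 2 := by omega
    rcases hamem with h' | h' | h' <;> omega
  -- powers
  have hA1 : (2:ℕ) ≤ 2^a := by
    calc (2:ℕ) = 2^1 := rfl
    _ ≤ 2^a := Nat.pow_le_pow_right (by norm_num) ha1
  have hAB : 2 * 2^a ≤ 2^b := by
    calc 2 * 2^a = 2^(a+1) := by ring
    _ ≤ 2^b := Nat.pow_le_pow_right (by norm_num) (by omega)
  have hBC : 2 * 2^b ≤ 2^c := by
    calc 2 * 2^b = 2^(b+1) := by ring
    _ ≤ 2^c := Nat.pow_le_pow_right (by norm_num) (by omega)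
  have hab' : (2:ℕ)^a < 2^b := Nat.pow_lt_pow_right (by norm_num) hab
  have hbc' : (2:ℕ)^b < 2^c := Nat.pow_lt_pow_right (by norm_num) hbc
  have h2A : (2:ℕ) ∣ 2^a := dvd_pow (dvd_refl 2) (by omega)
  have h2B : (2:ℕ) ∣ 2^b := dvd_pow (dvd_refl 2) (by omega)
  set N := 2^c + 2^b + 2^a with hNdef
  have hNcomm : N = 2^a + 2^b + 2^c := by rw [hNdef]; ring
  -- p ∣ N
  have horder : (2 : ZMod p) ^ g = 1 := by rw [hg]; exact pow_orderOf_eq_one _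
  have hy : (2 : ZMod p) ^ (g / 2) * (2 : ZMod p) ^ (g / 2) = 1 := by
    rw [← pow_add]
    have hgg : g / 2 + g / 2 = g := by
      rcases hgeven with ⟨w, hw⟩; omega
    rw [hgg, horder]
  have hyneg : (2 : ZMod p) ^ (g / 2) = -1 := by
    rcases mul_self_eq_one_iff.mp hy with h | h
    · exfalso
      have hdvd : g ∣ g / 2 := by
        have := orderOf_dvd_of_pow_eq_one h
        rwa [← hg] at this
      have hle : g ≤ g / 2 := Nat.le_of_dvd (by omega) hdvd
      omega
    · exact h
  have hressum : (2:ZMod p)^(a % g) + (2:ZMod p)^(b % g) + (2:ZMod p)^(c % g)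
      = (2:ZMod p)^(1:ℕ) + ((2:ZMod p)^(g/2) + (2:ZMod p)^(g/2)) := by
    have hmap := congrArg (fun M : Multiset ℕ => (M.map (fun r => (2:ZMod p)^r)).sum) hcong
    simp only [Multiset.insert_eq_cons, Multiset.map_cons, Multiset.map_singleton,
      Multiset.sum_cons, Multiset.sum_singleton] at hmap
    linear_combination hmap
  have hpn : p ∣ N := by
    have hcast : ((N : ℕ) : ZMod p) = 0 := by
      rw [hNdef]
      push_cast
      have ea : (2:ZMod p)^a = (2:ZMod p)^(a % g) := by
        rw [hg]; exact (pow_mod_orderOf _ _).symm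
      have eb : (2:ZMod p)^b = (2:ZMod p)^(b % g) := by
        rw [hg]; exact (pow_mod_orderOf _ _).symm
      have ec : (2:ZMod p)^c = (2:ZMod p)^(c % g) := by
        rw [hg]; exact (pow_mod_orderOf _ _).symm
      rw [ea, eb, ec]
      rw [hyneg, pow_one] at hressum
      linear_combination hressum
    exact (ZMod.natCast_eq_zero_iff N p).mp hcast
  -- the non-special toggle position k0
  set k0 : ℕ := if p ∣ (2^c + 1) then 2^c + 3 else 2^c + 1 with hk0def
  have hk0p : ¬ p ∣ k0 := by
    rw [hk0def]
    split_ifs with h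
    · intro h3
      have hd2 : p ∣ 2 := by
        have := Nat.dvd_sub h3 h
        simpa using this
      have := (Nat.prime_dvd_prime_iff_eq hp Nat.prime_two).mp hd2
      omega
    · exact h
  have hk0range : 2^c < k0 ∧ k0 ≤ 2^c + 3 := by
    rw [hk0def]; split_ifs <;> omega
  have hk0N : k0 < N := by omega
  have hk0off : k0 = 2^c + 1 ∨ k0 = 2^c + 3 := by
    rw [hk0def]; split_ifs <;> simp
  have h2choosek : 2 ∣ N.choose k0 := by
    rw [hNcomm]
    apply even_choose_three_pow_sum
    refine ⟨by omega, by omega, by omega, by omega, by omega, ?_, ?_, by omega⟩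
    · rcases hk0off with h | h <;> omega
    · rcases hk0off with h | h <;> omega
  have hpchoosek : p ∣ N.choose k0 := dvd_choose_of_dvd_left hp hpn hk0p (le_of_lt hk0N)
  -- toggle steps
  have hstep1 : ∀ S : Finset ℕ, S ⊆ Finset.Ico 1 N →
      (beta N S + beta N (tog k0 S)) % (2 * p) = 0 := by
    intro S hS
    exact toggle_even_mod hpodd (by omega) hk0N h2choosek hpchoosek hS
  have hptpow : ∀ x : ℕ, ¬ p ∣ 2^x := by
    intro x hx
    have := Nat.Prime.dvd_of_dvd_pow hp hx
    have := (Nat.prime_dvd_prime_iff_eq hp Nat.prime_two).mp this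
    omega
  have hstep2 : ∀ S : Finset ℕ, S ⊆ Finset.Ico 1 N →
      (beta N S + beta N (tog (sel (2^a+2^b) (2^a+2^c) (2^b+2^c) (2^a) (2^b) (2^c) S) S))
        % (2 * p) = p := by
    intro S hS
    by_cases hc1 : ((2^a+2^b ∈ S) ↔ (2^a+2^c ∈ S))
    · rw [sel, if_pos hc1]
      exact toggle_digit_mod hp hpodd hbc rfl (by rw [hNcomm]; ring)
        (by rw [hNcomm]; exact odd_choose_three_pow_digit hab hbc (Or.inl rfl))
        (hptpow a) hpn hS hc1
    · by_cases hc2 : ((2^a+2^b ∈ S) ↔ (2^b+2^c ∈ S))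
      · rw [sel, if_neg hc1, if_pos hc2]
        apply toggle_digit_mod hp hpodd (lt_trans hab hbc) rfl (by rw [hNcomm]; ring)
          (by rw [hNcomm]; exact odd_choose_three_pow_digit hab hbc (Or.inr (Or.inl rfl)))
          (hptpow b) hpn hS
        have e1 : (2:ℕ)^b + 2^a = 2^a + 2^b := by ring
        have e2 : (2:ℕ)^b + 2^c = 2^b + 2^c := rfl
        rw [e1, e2]
        exact hc2
      · have hc3 : ((2^a+2^c ∈ S) ↔ (2^b+2^c ∈ S)) := by tauto
        rw [sel, if_neg hc1, if_neg hc2]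
        apply toggle_digit_mod hp hpodd hab rfl (by rw [hNcomm]; ring)
          (by rw [hNcomm]; exact odd_choose_three_pow_digit hab hbc (Or.inr (Or.inr rfl)))
          (hptpow c) hpn hS
        have e1 : (2:ℕ)^c + 2^a = 2^a + 2^c := by ring
        have e2 : (2:ℕ)^c + 2^b = 2^b + 2^c := by ring
        rw [e1, e2]
        exact hc3
  -- sel properties
  have hsel_mem : ∀ S : Finset ℕ,
      sel (2^a+2^b) (2^a+2^c) (2^b+2^c) (2^a) (2^b) (2^c) S = 2^a
      ∨ sel (2^a+2^b) (2^a+2^c) (2^b+2^c) (2^a) (2^b) (2^c) S = 2^b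
      ∨ sel (2^a+2^b) (2^a+2^c) (2^b+2^c) (2^a) (2^b) (2^c) S = 2^c := by
    intro S
    rw [sel]
    split_ifs <;> simp
  have hsel_congr : ∀ (t : ℕ) (S : Finset ℕ), t ≠ 2^a+2^b → t ≠ 2^a+2^c → t ≠ 2^b+2^c →
      sel (2^a+2^b) (2^a+2^c) (2^b+2^c) (2^a) (2^b) (2^c) (tog t S)
        = sel (2^a+2^b) (2^a+2^c) (2^b+2^c) (2^a) (2^b) (2^c) S := by
    intro t S h1 h2 h3
    have e1 : (2^a+2^b ∈ tog t S) ↔ (2^a+2^b ∈ S) := mem_tog_of_ne _ (Ne.symm h1)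
    have e2 : (2^a+2^c ∈ tog t S) ↔ (2^a+2^c ∈ S) := mem_tog_of_ne _ (Ne.symm h2)
    have e3 : (2^b+2^c ∈ tog t S) ↔ (2^b+2^c ∈ S) := mem_tog_of_ne _ (Ne.symm h3)
    rw [sel, sel]
    simp only [e1, e2, e3]
  have hk0nspec : k0 ≠ 2^a+2^b ∧ k0 ≠ 2^a+2^c ∧ k0 ≠ 2^b+2^c := by
    refine ⟨by omega, ?_, ?_⟩
    · rcases hk0off with h | h <;> omega
    · rcases hk0off with h | h <;> omega
  have hdignspec : ∀ x : ℕ, (x = 2^a ∨ x = 2^b ∨ x = 2^c) →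
      x ≠ 2^a+2^b ∧ x ≠ 2^a+2^c ∧ x ≠ 2^b+2^c := by
    intro x hx
    rcases hx with rfl | rfl | rfl <;> exact ⟨by omega, by omega, by omega⟩
  have hselk0 : ∀ S : Finset ℕ,
      sel (2^a+2^b) (2^a+2^c) (2^b+2^c) (2^a) (2^b) (2^c) S ≠ k0 := by
    intro S
    rcases hsel_mem S with h | h | h <;> omega
  -- primitive root
  obtain ⟨ζ, hζ⟩ : ∃ ζ : ℂ, IsPrimitiveRoot ζ (2 * p) :=
    ⟨_, Complex.isPrimitiveRoot_exp (2 * p) (by omega)⟩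
  have hζ2p : ζ ^ (2 * p) = 1 := hζ.pow_eq_one
  have hζp : ζ ^ p = -1 := by
    have hsq : ζ ^ p * ζ ^ p = 1 := by
      rw [← pow_add]
      have : p + p = 2 * p := by ring
      rw [this, hζ2p]
    rcases mul_self_eq_one_iff.mp hsq with h | h
    · exact absurd h (hζ.pow_ne_one_of_pos_of_lt (by omega) (by omega))
    · exact h
  have hζne : ζ ≠ 0 := hζ.ne_zero (by omega)
  suffices hQ : (Polynomial.aeval ζ) (Q N) = 0 by
    have hdvd := minpoly.isIntegrallyClosed_dvd (hζ.isIntegral (by omega)) hQ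
    rwa [← Polynomial.cyclotomic_eq_minpoly hζ (by omega)] at hdvd
  rw [Q, map_sum]
  simp only [map_pow, Polynomial.aeval_X]
  apply Finset.sum_involution
    (fun S _ => tog (sel (2^a+2^b) (2^a+2^c) (2^b+2^c) (2^a) (2^b) (2^c) (tog k0 S)) (tog k0 S))
  · -- cancellation
    intro S hSmem
    have hS : S ⊆ Finset.Ico 1 N := Finset.mem_powerset.mp hSmem
    have hk0Ico : k0 ∈ Finset.Ico 1 N := Finset.mem_Ico.mpr ⟨by omega, hk0N⟩
    have hS' : tog k0 S ⊆ Finset.Ico 1 N := tog_subset hk0Ico hS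
    have E1 := hstep1 S hS
    have E2 := hstep2 (tog k0 S) hS'
    have m1 : (beta N S + beta N (tog k0 S)) ≡ 0 [MOD 2 * p] := by
      unfold Nat.ModEq
      rw [Nat.zero_mod]
      exact E1
    have m2 : (beta N (tog k0 S)
        + beta N (tog (sel (2^a+2^b) (2^a+2^c) (2^b+2^c) (2^a) (2^b) (2^c) (tog k0 S))
          (tog k0 S))) ≡ p [MOD 2 * p] := by
      unfold Nat.ModEq
      rw [Nat.mod_eq_of_lt (show p < 2 * p by omega)]
      exact E2
    have hchain : beta N (tog (sel (2^a+2^b) (2^a+2^c) (2^b+2^c) (2^a) (2^b) (2^c) (tog k0 S))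
        (tog k0 S)) ≡ p + beta N S [MOD 2 * p] := by
      set z := beta N (tog (sel (2^a+2^b) (2^a+2^c) (2^b+2^c) (2^a) (2^b) (2^c) (tog k0 S))
        (tog k0 S)) with hz
      calc z = z + 0 := (add_zero z).symm
      _ ≡ z + (beta N S + beta N (tog k0 S)) [MOD 2 * p] := Nat.ModEq.add_left z m1.symm
      _ = (beta N (tog k0 S) + z) + beta N S := by ring
      _ ≡ p + beta N S [MOD 2 * p] := Nat.ModEq.add_right _ m2
    have hpow := pow_eq_pow_of_modEq' hζ2p hchain
    rw [hpow, pow_add, hζp]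
    ring
  · -- no fixed point
    intro S hSmem h0 he
    have hk1 : k0 ∈ tog (sel (2^a+2^b) (2^a+2^c) (2^b+2^c) (2^a) (2^b) (2^c) (tog k0 S))
        (tog k0 S) ↔ k0 ∈ tog k0 S :=
      mem_tog_of_ne _ (fun h => hselk0 (tog k0 S) h.symm)
    rw [he, mem_tog_self] at hk1
    by_cases hk0S : k0 ∈ S
    · exact (hk1.mp hk0S) hk0S
    · exact hk0S (hk1.mpr hk0S)
  · -- maps into the powerset
    intro S hSmem
    have hS : S ⊆ Finset.Ico 1 N := Finset.mem_powerset.mp hSmem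
    have hk0Ico : k0 ∈ Finset.Ico 1 N := Finset.mem_Ico.mpr ⟨by omega, hk0N⟩
    have hselIco : sel (2^a+2^b) (2^a+2^c) (2^b+2^c) (2^a) (2^b) (2^c) (tog k0 S)
        ∈ Finset.Ico 1 N := by
      rcases hsel_mem (tog k0 S) with h | h | h <;> rw [h] <;>
        exact Finset.mem_Ico.mpr ⟨by omega, by omega⟩
    exact Finset.mem_powerset.mpr (tog_subset hselIco (tog_subset hk0Ico hS))
  · -- involution
    intro S hSmem
    set t := sel (2^a+2^b) (2^a+2^c) (2^b+2^c) (2^a) (2^b) (2^c) (tog k0 S) with htdef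
    have htd := hsel_mem (tog k0 S)
    rw [← htdef] at htd
    have htnspec := hdignspec t htd
    have htk0 : t ≠ k0 := hselk0 (tog k0 S)
    -- tog k0 (tog t (tog k0 S)) = tog t S
    have e1 : tog k0 (tog t (tog k0 S)) = tog t S := by
      rw [tog_comm (fun h => htk0 h.symm), tog_tog]
    have e2 : sel (2^a+2^b) (2^a+2^c) (2^b+2^c) (2^a) (2^b) (2^c) (tog k0 (tog t (tog k0 S)))
        = t := by
      rw [e1, hsel_congr t S htnspec.1 htnspec.2.1 htnspec.2.2, htdef,
        hsel_congr k0 S hk0nspec.1 hk0nspec.2.1 hk0nspec.2.2]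
    rw [e2, e1]
    exact tog_tog t S
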